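/- Let 0<α≤1, n/(n+α)<p<1, q=p(1+α/n), w ∈ A_q, and let a be a w-(p,q,0)-atom supported in the cube Q=Q(x₀,r) centered at x₀ with side length r. Then there is a constant C>0, independent of a, such that for every x ∉ 2√n·Q (in particular for all x with |x−x₀| ≥ √n·r), g_α(a)(x) ≤ C·(|Q|/w(Q)^{1/p})·r^α·|x−x₀|^{−(n+α)}. -/

import Mathlib

open MeasureTheory ENNReal Real SchwartzMap FourierTransform

noncomputable section

abbrev Rn (n : ℕ) := EuclideanSpace ℝ (Fin n)

def cube {n : ℕ} (x₀ : Rn n) (r : ℝ) : Set (Rn n) :=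
  {x | ∀ i, |x i - x₀ i| ≤ r / 2}

def wVol {n : ℕ} (w : Rn n → ℝ) (E : Set (Rn n)) : ℝ≥0∞ :=
  ∫⁻ x in E, ENNReal.ofReal (w x)

def IsAqWith {n : ℕ} (w : Rn n → ℝ) (q : ℝ) (C : ℝ) : Prop :=
  (∀ x, 0 ≤ w x) ∧ (∀ᵐ x, 0 < w x) ∧ LocallyIntegrable w volume ∧
    ∀ (x₀ : Rn n) (r : ℝ), 0 < r →
      ((volume (cube x₀ r))⁻¹ * wVol w (cube x₀ r)) *
        ((volume (cube x₀ r))⁻¹ *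
          ∫⁻ x in cube x₀ r, ENNReal.ofReal (w x ^ (-(1 : ℝ) / (q - 1)))) ^ (q - 1)
        ≤ ENNReal.ofReal C

def IsAq {n : ℕ} (w : Rn n → ℝ) (q : ℝ) : Prop :=
  ∃ C : ℝ, 0 < C ∧ IsAqWith w q C

def IsAinfty {n : ℕ} (w : Rn n → ℝ) : Prop :=
  ∃ q : ℝ, 1 < q ∧ IsAq w q

def lpwNorm {n : ℕ} (w : Rn n → ℝ) (p : ℝ) (g : Rn n → ℝ≥0∞) : ℝ≥0∞ :=
  (∫⁻ x, g x ^ p * ENNReal.ofReal (w x)) ^ (1 / p)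

def lqwNormF {n : ℕ} (w : Rn n → ℝ) (q : ℝ) (a : Rn n → ℝ) : ℝ≥0∞ :=
  (∫⁻ x, ENNReal.ofReal (|a x| ^ q) * ENNReal.ofReal (w x)) ^ (1 / q)

/-- A `w`-`(p,q,0)`-atom supported in the cube `Q(x₀, r)`. -/
def IsWAtom {n : ℕ} (w : Rn n → ℝ) (p q : ℝ) (a : Rn n → ℝ) (x₀ : Rn n) (r : ℝ) : Prop :=
  Measurable a ∧ (∀ x, x ∉ cube x₀ r → a x = 0) ∧
    lqwNormF w q a ≤ (wVol w (cube x₀ r)) ^ (1 / q - 1 / p) ∧ (∫ x, a x) = 0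

/- Schwartz space / tempered distributions -/

lemma hasTemperateGrowth_affine {n : ℕ} (c : Rn n) (L : Rn n →L[ℝ] Rn n) :
    Function.HasTemperateGrowth (fun y : Rn n => c + L y) := by
  apply Function.HasTemperateGrowth.of_fderiv (k := 1) (C := ‖c‖ + ‖L‖)
  · have h : fderiv ℝ (fun y : Rn n => c + L y) = fun _ => L := by
      ext1 y
      have : HasFDerivAt (fun y : Rn n => c + L y) (0 + L) y :=
        (hasFDerivAt_const c y).add (L.hasFDerivAt)
      simpa using this.fderiv
    rw [h]
    exact Function.HasTemperateGrowth.const L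
  · exact (differentiable_const c).add L.differentiable
  · intro x
    calc ‖c + L x‖ ≤ ‖c‖ + ‖L x‖ := norm_add_le _ _
      _ ≤ ‖c‖ + ‖L‖ * ‖x‖ := by gcongr; exact L.le_opNorm x
      _ ≤ (‖c‖ + ‖L‖) * (1 + ‖x‖) ^ 1 := by
          rw [pow_one]
          nlinarith [norm_nonneg c, norm_nonneg (L : Rn n →L[ℝ] Rn n), norm_nonneg x]

/-- For `t ≠ 0`, the Schwartz function `y ↦ t^{-n} φ((x - y)/t) = φ_t(x - y)`;
for `t = 0` the junk value `0`. -/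
def shiftDilate {n : ℕ} (φ : 𝓢(Rn n, ℝ)) (t : ℝ) (x : Rn n) : 𝓢(Rn n, ℝ) := by
  classical
  by_cases h : t = 0
  · exact 0
  · refine (t ^ (-(n : ℤ))) • (SchwartzMap.compCLM (𝕜 := ℝ)
      (g := fun y : Rn n => t⁻¹ • (x - y)) ?_ ?_ φ)
    · have : (fun y : Rn n => t⁻¹ • (x - y))
          = fun y : Rn n => (t⁻¹ • x) + ((-t⁻¹) • (ContinuousLinearMap.id ℝ (Rn n))) y := by
        funext y
        simp [smul_sub, sub_eq_add_neg]
      rw [this]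
      exact hasTemperateGrowth_affine _ _
    · refine ⟨1, ‖x‖ + |t|, fun y => ?_⟩
      have h1 : ‖x - y‖ = |t| * ‖t⁻¹ • (x - y)‖ := by
        rw [norm_smul, norm_inv, Real.norm_eq_abs, ← mul_assoc,
          mul_inv_cancel₀ (by simpa using h), one_mul]
      have h0 : y = x - (x - y) := by abel
      calc ‖y‖ = ‖x - (x - y)‖ := by rw [← h0]
        _ ≤ ‖x‖ + ‖x - y‖ := norm_sub_le _ _
        _ = ‖x‖ + |t| * ‖t⁻¹ • (x - y)‖ := by rw [h1]
        _ ≤ (‖x‖ + |t|) * (1 + ‖t⁻¹ • (x - y)‖) ^ 1 := by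
            have h2 : (0:ℝ) ≤ ‖t⁻¹ • (x - y)‖ := norm_nonneg _
            have h3 : (0:ℝ) ≤ ‖x‖ := norm_nonneg _
            have h4 : (0:ℝ) ≤ |t| := abs_nonneg _
            nlinarith

/-- The convolution `f * φ_t (x)` of a tempered distribution `f` with the dilate `φ_t` of a
Schwartz function `φ`. -/
def distConv {n : ℕ} (f : 𝓢(Rn n, ℝ) →L[ℝ] ℝ) (φ : 𝓢(Rn n, ℝ)) (t : ℝ) (x : Rn n) : ℝ :=
  f (shiftDilate φ t x)

/-- The maximal function `M_φ f (x) = sup_{t > 0} |f * φ_t (x)|` of a tempered distribution. -/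
def maxFun {n : ℕ} (φ : 𝓢(Rn n, ℝ)) (f : 𝓢(Rn n, ℝ) →L[ℝ] ℝ) (x : Rn n) : ℝ≥0∞ :=
  ⨆ (t : ℝ) (_ : 0 < t), ENNReal.ofReal |distConv f φ t x|

/-- The norm of `f` in the weighted Hardy space `H^p_w`, defined through the
maximal function `M_φ f`. -/
def hardyNorm {n : ℕ} (w : Rn n → ℝ) (p : ℝ) (φ : 𝓢(Rn n, ℝ))
    (f : 𝓢(Rn n, ℝ) →L[ℝ] ℝ) : ℝ≥0∞ :=
  lpwNorm w p (maxFun φ f)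

/-- Membership in the weighted Hardy space `H^p_w`. -/
def MemHp {n : ℕ} (w : Rn n → ℝ) (p : ℝ) (φ : 𝓢(Rn n, ℝ))
    (f : 𝓢(Rn n, ℝ) →L[ℝ] ℝ) : Prop :=
  hardyNorm w p φ f < ∞

/-- A tempered distribution vanishes weakly at infinity if `f * φ_t → 0` as `t → ∞`
in the sense of distributions. -/
def VanishesWeaklyAtInfinity {n : ℕ} (f : 𝓢(Rn n, ℝ) →L[ℝ] ℝ) : Prop :=
  ∀ φ η : 𝓢(Rn n, ℝ),
    Filter.Tendsto (fun t : ℝ => ∫ x, distConv f φ t x * η x) Filter.atTop (nhds 0)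

/- Lipschitz space `Lip(α,1,0)` -/

/-- The average `b_Q` of `b` over `Q`. -/
def cubeAvg {n : ℕ} (b : Rn n → ℝ) (Q : Set (Rn n)) : ℝ :=
  (volume Q).toReal⁻¹ * ∫ y in Q, b y

/-- The `Lip(α,1,0)` norm `sup_Q |Q|^{-1-α/n} ∫_Q |b - b_Q|`. -/
def lipNorm (n : ℕ) (α : ℝ) (b : Rn n → ℝ) : ℝ≥0∞ :=
  ⨆ (x₀ : Rn n) (r : ℝ) (_ : 0 < r),
    (volume (cube x₀ r)) ^ (-(1 : ℝ) - α / n) *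
      ∫⁻ y in cube x₀ r, ENNReal.ofReal |b y - cubeAvg b (cube x₀ r)|

/-- `F` realizes the tempered distribution `f` as an element of the dual of `Lip(α,1,0)`:
it is a linear functional, bounded with respect to the `Lip(α,1,0)` norm,
which agrees with `f` on Schwartz functions. -/
def IsLipDualExt {n : ℕ} (α : ℝ) (f : 𝓢(Rn n, ℝ) →L[ℝ] ℝ)
    (F : (Rn n → ℝ) →ₗ[ℝ] ℝ) : Prop :=
  (∀ φ : 𝓢(Rn n, ℝ), F (φ : Rn n → ℝ) = f φ) ∧
    ∃ C : ℝ, 0 ≤ C ∧ ∀ b : Rn n → ℝ,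
      ENNReal.ofReal |F b| ≤ ENNReal.ofReal C * lipNorm n α b

/- Intrinsic square functions -/

/-- The family `𝒞_α`. -/
def Calpha (n : ℕ) (α : ℝ) : Set (Rn n → ℝ) :=
  {φ | Function.support φ ⊆ Metric.closedBall 0 1 ∧ (∫ x, φ x) = 0 ∧
    ∀ x x', |φ x - φ x'| ≤ ‖x - x'‖ ^ α}

/-- The family `𝒞_{(α,ε)}`. -/
def CalphaEps (n : ℕ) (α ε : ℝ) : Set (Rn n → ℝ) :=
  {φ | (∀ x, |φ x| ≤ (1 + ‖x‖) ^ (-(n : ℝ) - ε)) ∧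
    (∀ x x', |φ x - φ x'| ≤
      ‖x - x'‖ ^ α * ((1 + ‖x‖) ^ (-(n : ℝ) - ε) + (1 + ‖x'‖) ^ (-(n : ℝ) - ε))) ∧
    (∫ x, φ x) = 0}

/-- The kernel `z ↦ φ_t(y - z) = t^{-n} φ((y-z)/t)`. -/
def dilKer {n : ℕ} (φ : Rn n → ℝ) (t : ℝ) (y : Rn n) : Rn n → ℝ :=
  fun z => t ^ (-(n : ℤ)) * φ (t⁻¹ • (y - z))

/-- `A_α(f)(y,t)` for the functional `F` representing `f` on `Lip(α,1,0)`. -/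
def intrA {n : ℕ} (α : ℝ) (F : (Rn n → ℝ) →ₗ[ℝ] ℝ) (y : Rn n) (t : ℝ) : ℝ≥0∞ :=
  ⨆ φ ∈ Calpha n α, ENNReal.ofReal |F (dilKer φ t y)|

/-- `Ã_{(α,ε)}(f)(y,t)` for the functional `F` representing `f`. -/
def intrAEps {n : ℕ} (α ε : ℝ) (F : (Rn n → ℝ) →ₗ[ℝ] ℝ) (y : Rn n) (t : ℝ) : ℝ≥0∞ :=
  ⨆ φ ∈ CalphaEps n α ε, ENNReal.ofReal |F (dilKer φ t y)|

/-- `A_α(f)(y,t)` for a (locally integrable) function `f`. -/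
def intrAf {n : ℕ} (α : ℝ) (f : Rn n → ℝ) (y : Rn n) (t : ℝ) : ℝ≥0∞ :=
  ⨆ φ ∈ Calpha n α, ENNReal.ofReal |∫ z, f z * dilKer φ t y z|

/-- `Ã_{(α,ε)}(f)(y,t)` for a function `f`. -/
def intrAfEps {n : ℕ} (α ε : ℝ) (f : Rn n → ℝ) (y : Rn n) (t : ℝ) : ℝ≥0∞ :=
  ⨆ φ ∈ CalphaEps n α ε, ENNReal.ofReal |∫ z, f z * dilKer φ t y z|

/-- The `g`-type square function built from a generalized square-function kernel `A(y,t)`: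
`x ↦ (∫_0^∞ A(x,t)² dt/t)^{1/2}`. -/
def gSF {n : ℕ} (A : Rn n → ℝ → ℝ≥0∞) (x : Rn n) : ℝ≥0∞ :=
  (∫⁻ t in Set.Ioi (0 : ℝ), (A x t) ^ 2 * (ENNReal.ofReal t)⁻¹) ^ (1 / (2 : ℝ))

/-- The area-integral type square function of aperture `β`:
`x ↦ (∬_{|x-y| < βt} A(y,t)² dy dt/t^{n+1})^{1/2}`. -/
def sSF (n : ℕ) (β : ℝ) (A : Rn n → ℝ → ℝ≥0∞) (x : Rn n) : ℝ≥0∞ :=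
  (∫⁻ t in Set.Ioi (0 : ℝ),
      (∫⁻ y in Metric.ball x (β * t), (A y t) ^ 2) * (ENNReal.ofReal (t ^ (n + 1)))⁻¹) ^
    (1 / (2 : ℝ))

/-- The `g^*_λ`-type square function:
`x ↦ (∬_{ℝ^{n+1}_+} (t/(t+|x-y|))^{λn} A(y,t)² dy dt/t^{n+1})^{1/2}`. -/
def gStarSF (n : ℕ) (lam : ℝ) (A : Rn n → ℝ → ℝ≥0∞) (x : Rn n) : ℝ≥0∞ :=
  (∫⁻ t in Set.Ioi (0 : ℝ),
      (∫⁻ y, ENNReal.ofReal ((t / (t + ‖x - y‖)) ^ (lam * n)) * (A y t) ^ 2) *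
        (ENNReal.ofReal (t ^ (n + 1)))⁻¹) ^ (1 / (2 : ℝ))

/-- The weighted maximal function `M_w`. -/
def wMaximal {n : ℕ} (w : Rn n → ℝ) (f : Rn n → ℝ) (x : Rn n) : ℝ≥0∞ :=
  ⨆ (x₀ : Rn n) (r : ℝ) (_ : 0 < r) (_ : x ∈ cube x₀ r),
    (wVol w (cube x₀ r))⁻¹ * ∫⁻ y in cube x₀ r, ENNReal.ofReal |f y| * ENNReal.ofReal (w y)



section AuxPointwise

lemma abs_apply_le_norm {n : ℕ} (x : Rn n) (i : Fin n) : |x i| ≤ ‖x‖ := by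
  rw [EuclideanSpace.norm_eq]
  have h1 : |x i| = Real.sqrt (‖x i‖ ^ 2) := by
    rw [Real.norm_eq_abs, Real.sqrt_sq_eq_abs, abs_abs]
  rw [h1]
  exact Real.sqrt_le_sqrt (Finset.single_le_sum (f := fun j => ‖x j‖ ^ 2)
    (fun j _ => sq_nonneg _) (Finset.mem_univ i))

lemma norm_le_sqrt_mul {n : ℕ} (x : Rn n) {c : ℝ} (hc : 0 ≤ c) (h : ∀ i, |x i| ≤ c) :
    ‖x‖ ≤ Real.sqrt n * c := by
  rw [EuclideanSpace.norm_eq]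
  have hsum : ∑ i, ‖x i‖ ^ 2 ≤ (n : ℝ) * c ^ 2 := by
    calc ∑ i, ‖x i‖ ^ 2 ≤ ∑ _i : Fin n, c ^ 2 :=
          Finset.sum_le_sum (fun i _ => by
            rw [Real.norm_eq_abs]
            exact pow_le_pow_left₀ (abs_nonneg _) (h i) 2)
      _ = (n : ℝ) * c ^ 2 := by simp [Finset.sum_const, mul_comm]
  calc Real.sqrt (∑ i, ‖x i‖ ^ 2) ≤ Real.sqrt ((n : ℝ) * c ^ 2) := Real.sqrt_le_sqrt hsum
    _ = Real.sqrt n * c := by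
        rw [Real.sqrt_mul (by positivity), Real.sqrt_sq hc]

lemma cube_isClosed {n : ℕ} (x₀ : Rn n) (r : ℝ) : IsClosed (cube x₀ r) := by
  have : cube x₀ r = ⋂ i, {x : Rn n | |x i - x₀ i| ≤ r / 2} := by
    ext x; simp [cube, Set.mem_iInter]
  rw [this]
  refine isClosed_iInter fun i => ?_
  have hcont : Continuous fun x : Rn n => |x i - x₀ i| :=
    (((EuclideanSpace.proj (𝕜 := ℝ) i).continuous).sub continuous_const).abs
  exact isClosed_le hcont continuous_const

lemma closedBall_subset_cube {n : ℕ} (x₀ : Rn n) (r : ℝ) :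
    Metric.closedBall x₀ (r / 2) ⊆ cube x₀ r := by
  intro x hx i
  have h := abs_apply_le_norm (x - x₀) i
  simp only [PiLp.sub_apply] at h
  calc |x i - x₀ i| ≤ ‖x - x₀‖ := h
    _ ≤ r / 2 := by rwa [← dist_eq_norm, ← Metric.mem_closedBall]

lemma cube_subset_closedBall {n : ℕ} (x₀ : Rn n) {r : ℝ} (hr : 0 ≤ r) :
    cube x₀ r ⊆ Metric.closedBall x₀ (Real.sqrt n * (r / 2)) := by
  intro x hx
  rw [Metric.mem_closedBall, dist_eq_norm]
  refine norm_le_sqrt_mul _ (by positivity) fun i => ?_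
  simpa [PiLp.sub_apply] using hx i

lemma cube_isCompact {n : ℕ} (x₀ : Rn n) {r : ℝ} (hr : 0 ≤ r) : IsCompact (cube x₀ r) :=
  Metric.isCompact_of_isClosed_isBounded (cube_isClosed x₀ r)
    (Metric.isBounded_closedBall.subset (cube_subset_closedBall x₀ hr))

lemma volume_cube_pos {n : ℕ} (x₀ : Rn n) {r : ℝ} (hr : 0 < r) : 0 < volume (cube x₀ r) :=
  lt_of_lt_of_le (Metric.measure_closedBall_pos volume x₀ (by linarith)) <|
    measure_mono (closedBall_subset_cube x₀ r)

lemma volume_cube_lt_top {n : ℕ} (x₀ : Rn n) {r : ℝ} (hr : 0 ≤ r) :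
    volume (cube x₀ r) < ⊤ :=
  (cube_isCompact x₀ hr).measure_lt_top

/-- Hölder-continuous functions are continuous. -/
lemma continuous_of_holder {n : ℕ} {φ : Rn n → ℝ} {α : ℝ} (hα : 0 < α)
    (h : ∀ x x', |φ x - φ x'| ≤ ‖x - x'‖ ^ α) : Continuous φ := by
  rw [Metric.continuous_iff]
  intro b ε hε
  refine ⟨ε ^ (1 / α), Real.rpow_pos_of_pos hε _, fun a ha => ?_⟩
  have h1 : dist (φ a) (φ b) ≤ dist a b ^ α := by
    rw [Real.dist_eq, dist_eq_norm]; exact h a b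
  have h2 : dist a b ^ α < (ε ^ (1 / α)) ^ α :=
    Real.rpow_lt_rpow dist_nonneg ha hα
  have h3 : (ε ^ (1 / α)) ^ α = ε := by
    rw [← Real.rpow_mul hε.le, one_div, inv_mul_cancel₀ hα.ne', Real.rpow_one]
  rw [h3] at h2
  exact lt_of_le_of_lt h1 h2

lemma calpha_eq_zero {n : ℕ} {φ : Rn n → ℝ}
    (hφs : Function.support φ ⊆ Metric.closedBall 0 1) {u : Rn n} (hu : 1 < ‖u‖) :
    φ u = 0 := by
  by_contra h
  have hmem := hφs (Function.mem_support.mpr h)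
  rw [Metric.mem_closedBall, dist_zero_right] at hmem
  linarith

end AuxPointwise


set_option maxHeartbeats 2000000 in
/-- Let `0 < α ≤ 1`, `n/(n+α) < p < 1`, `q = p(1+α/n)`, `w ∈ A_q`, and let `a` be a
`w`-`(p,q,0)`-atom supported in the cube `Q = Q(x₀,r)`. Then there is a constant `C > 0`
independent of `a` such that for every `x ∉ 2√n·Q`,
`g_α(a)(x) ≤ C · (|Q|/w(Q)^{1/p}) · r^α · |x-x₀|^{-(n+α)}`. -/
theorem intrinsic_g_function_of_atom_pointwise_bound
    {n : ℕ} (hn : 0 < n) (α p q : ℝ) (hα0 : 0 < α) (hα1 : α ≤ 1)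
    (hp0 : (n : ℝ) / ((n : ℝ) + α) < p) (hp1 : p < 1)
    (hq : q = p * (1 + α / (n : ℝ)))
    (w : Rn n → ℝ) (hw : IsAq w q) :
    ∃ C : ℝ, 0 < C ∧ ∀ (a : Rn n → ℝ) (x₀ : Rn n) (r : ℝ), 0 < r →
      IsWAtom w p q a x₀ r →
      ∀ x : Rn n, x ∉ cube x₀ (2 * Real.sqrt n * r) →
      gSF (intrAf α a) x ≤ ENNReal.ofReal
        (C * ((volume (cube x₀ r)).toReal / (wVol w (cube x₀ r)).toReal ^ (1 / p)) *
          r ^ α * ‖x - x₀‖ ^ (-((n : ℝ) + α))) := by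
  obtain ⟨C₀, hC₀, hw0, hwpos, hwloc, hAq⟩ := hw
  have hn' : (0:ℝ) < n := by exact_mod_cast hn
  have hn1 : (1:ℝ) ≤ n := by exact_mod_cast hn
  have hp0' : 0 < p := lt_trans (by positivity) hp0
  have hq1 : 1 < q := by
    have h1 : ((n:ℝ)/((n:ℝ)+α)) * (1 + α/(n:ℝ)) = 1 := by
      field_simp
    calc (1:ℝ) = ((n:ℝ)/((n:ℝ)+α)) * (1 + α/(n:ℝ)) := h1.symm
      _ < p * (1 + α/(n:ℝ)) := by
          apply mul_lt_mul_of_pos_right hp0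
          positivity
      _ = q := hq.symm
  have hq0 : 0 < q := lt_trans one_pos hq1
  have hq1' : (0:ℝ) < q - 1 := by linarith
  set β : ℝ := (n:ℝ) + α with hβ
  have hβpos : 0 < β := by positivity
  have hβ1 : 1 ≤ β := by simp only [hβ]; linarith
  have hsqrtn : 1 ≤ Real.sqrt n := by
    rw [show (1:ℝ) = Real.sqrt 1 by simp]
    exact Real.sqrt_le_sqrt hn1
  have hsqrtn0 : 0 < Real.sqrt n := by linarith
  refine ⟨2 ^ β * (Real.sqrt n / 2) ^ α * C₀ ^ (1/q), by positivity, ?_⟩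
  rintro a x₀ r hr ⟨ha_meas, ha0, ha_norm, ha_zero⟩ x hx
  set Q : Set (Rn n) := cube x₀ r with hQdef
  have hQc : IsCompact Q := cube_isCompact x₀ hr.le
  have hQm : MeasurableSet Q := (cube_isClosed x₀ r).measurableSet
  set V : ℝ≥0∞ := volume Q with hV
  set U : ℝ≥0∞ := wVol w Q with hU
  have hV0 : V ≠ 0 := (volume_cube_pos x₀ hr).ne'
  have hVtop : V ≠ ⊤ := (volume_cube_lt_top x₀ hr.le).ne
  have hwInt : IntegrableOn w Q volume := hwloc.integrableOn_isCompact hQc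
  have hwae : AEMeasurable w (volume.restrict Q) := hwInt.aestronglyMeasurable.aemeasurable
  have hWaem : AEMeasurable (fun z => ENNReal.ofReal (w z)) (volume.restrict Q) :=
    ENNReal.measurable_ofReal.comp_aemeasurable hwae
  have hUtop : U ≠ ⊤ := by
    have h1 : U ≤ ∫⁻ z in Q, (‖w z‖₊ : ℝ≥0∞) := by
      refine lintegral_mono fun z => ?_
      rw [show ((‖w z‖₊ : ℝ≥0∞)) = ENNReal.ofReal |w z| from Real.enorm_eq_ofReal_abs _]
      exact ENNReal.ofReal_le_ofReal (le_abs_self _)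
    exact (lt_of_le_of_lt h1 hwInt.2).ne
  have hU0 : U ≠ 0 := by
    intro h0
    have h1 : (fun z => ENNReal.ofReal (w z)) =ᵐ[volume.restrict Q] 0 :=
      (lintegral_eq_zero_iff' hWaem).mp h0
    have h2 : ∀ᵐ z ∂(volume.restrict Q), False := by
      filter_upwards [h1, ae_restrict_of_ae hwpos] with z hz1 hz2
      rw [Pi.zero_apply, ENNReal.ofReal_eq_zero] at hz1
      linarith
    rw [ae_iff] at h2
    simp only [not_false_eq_true, Set.setOf_true, Measure.restrict_apply_univ] at h2
    exact hV0 h2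
  -- ### Hölder and the A_q condition: bound for ∫ |a|
  set q' : ℝ := q / (q - 1) with hq'def
  have hq'0 : 0 < q' := div_pos hq0 hq1'
  have hconj : q.HolderConjugate q' := by rw [hq'def]; exact Real.HolderConjugate.conjExponent hq1
  have h1q' : 1/q' = (q-1)/q := by rw [hq'def]; field_simp
  set I : ℝ≥0∞ := ∫⁻ z in Q, ENNReal.ofReal (w z ^ (-(1:ℝ) / (q - 1))) with hI
  set f : Rn n → ℝ≥0∞ := fun z => ENNReal.ofReal |a z| * (ENNReal.ofReal (w z)) ^ (1/q) with hf
  set g : Rn n → ℝ≥0∞ := fun z => (ENNReal.ofReal (w z)) ^ (-(1/q)) with hg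
  have haem : AEMeasurable (fun z => ENNReal.ofReal |a z|) (volume.restrict Q) :=
    (ENNReal.measurable_ofReal.comp ha_meas.abs).aemeasurable
  have hfm : AEMeasurable f (volume.restrict Q) := haem.mul (hWaem.pow aemeasurable_const)
  have hgm : AEMeasurable g (volume.restrict Q) := hWaem.pow aemeasurable_const
  have hfg : (fun z => ENNReal.ofReal |a z|) =ᵐ[volume.restrict Q] (f * g) := by
    filter_upwards [ae_restrict_of_ae hwpos] with z hz
    have h0 : ENNReal.ofReal (w z) ≠ 0 := by
      rw [ne_eq, ENNReal.ofReal_eq_zero]; linarith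
    have ht : ENNReal.ofReal (w z) ≠ ⊤ := ENNReal.ofReal_ne_top
    simp only [hf, hg, Pi.mul_apply]
    rw [mul_assoc, ← ENNReal.rpow_add _ _ h0 ht]
    simp
  have hHolder := ENNReal.lintegral_mul_le_Lp_mul_Lq (volume.restrict Q) hconj hfm hgm
  have hfq : (∫⁻ z, f z ^ q ∂(volume.restrict Q)) ^ (1/q) ≤ U ^ (1/q - 1/p) := by
    have he : ∀ z, f z ^ q = ENNReal.ofReal (|a z| ^ q) * ENNReal.ofReal (w z) := by
      intro z
      simp only [hf]
      rw [ENNReal.mul_rpow_of_nonneg _ _ hq0.le, ← ENNReal.rpow_mul, one_div,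
        inv_mul_cancel₀ hq0.ne', ENNReal.rpow_one,
        ENNReal.ofReal_rpow_of_nonneg (abs_nonneg _) hq0.le]
    calc (∫⁻ z, f z ^ q ∂(volume.restrict Q)) ^ (1/q)
        = (∫⁻ z in Q, ENNReal.ofReal (|a z| ^ q) * ENNReal.ofReal (w z)) ^ (1/q) := by
          congr 1
          exact lintegral_congr fun z => he z
      _ ≤ (∫⁻ z, ENNReal.ofReal (|a z| ^ q) * ENNReal.ofReal (w z)) ^ (1/q) :=
          ENNReal.rpow_le_rpow (setLIntegral_le_lintegral _ _) (by positivity)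
      _ = lqwNormF w q a := rfl
      _ ≤ U ^ (1/q - 1/p) := ha_norm
  have hgq : (∫⁻ z, g z ^ q' ∂(volume.restrict Q)) = I := by
    refine lintegral_congr_ae ?_
    filter_upwards [ae_restrict_of_ae hwpos] with z hz
    simp only [hg]
    rw [← ENNReal.rpow_mul, ENNReal.ofReal_rpow_of_pos hz]
    congr 1
    rw [hq'def]
    field_simp
  have hXle : (V⁻¹ * I) ^ (q-1) ≤ (V * U⁻¹) * ENNReal.ofReal C₀ := by
    have hAne0 : V⁻¹ * U ≠ 0 :=
      mul_ne_zero (ENNReal.inv_ne_zero.mpr hVtop) hU0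
    have hAtop : V⁻¹ * U ≠ ⊤ :=
      ENNReal.mul_ne_top (ENNReal.inv_ne_top.mpr hV0) hUtop
    have hAinv : (V⁻¹ * U)⁻¹ = V * U⁻¹ := by
      rw [ENNReal.mul_inv (Or.inl (ENNReal.inv_ne_zero.mpr hVtop))
        (Or.inl (ENNReal.inv_ne_top.mpr hV0)), inv_inv]
    calc (V⁻¹*I)^(q-1) = (V⁻¹*U)⁻¹ * ((V⁻¹*U) * (V⁻¹*I)^(q-1)) := by
          rw [← mul_assoc, ENNReal.inv_mul_cancel hAne0 hAtop, one_mul]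
      _ ≤ (V⁻¹*U)⁻¹ * ENNReal.ofReal C₀ := mul_le_mul_right (hAq x₀ r hr) _
      _ = (V * U⁻¹) * ENNReal.ofReal C₀ := by rw [hAinv]
  have hIle : I ^ (1/q') ≤ ENNReal.ofReal C₀ ^ (1/q) * V * U ^ (-(1/q)) := by
    have e1 : I = V * (V⁻¹ * I) := by
      rw [← mul_assoc, ENNReal.mul_inv_cancel hV0 hVtop, one_mul]
    calc I ^ (1/q') = (V * (V⁻¹ * I)) ^ ((q-1)/q) := by rw [← e1, h1q']
      _ = V ^ ((q-1)/q) * ((V⁻¹*I) ^ (q-1)) ^ (1/q) := by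
          rw [ENNReal.mul_rpow_of_nonneg _ _ (by positivity)]
          congr 1
          rw [← ENNReal.rpow_mul]
          congr 1
          field_simp
      _ ≤ V ^ ((q-1)/q) * ((V * U⁻¹) * ENNReal.ofReal C₀) ^ (1/q) := by
          gcongr
      _ = ENNReal.ofReal C₀ ^ (1/q) * V * U ^ (-(1/q)) := by
          rw [ENNReal.mul_rpow_of_nonneg _ _ (by positivity),
            ENNReal.mul_rpow_of_nonneg _ _ (by positivity),
            ENNReal.inv_rpow, ← ENNReal.rpow_neg]
          calc V ^ ((q-1)/q) * (V ^ (1/q) * U ^ (-(1/q)) * ENNReal.ofReal C₀ ^ (1/q))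
              = (V ^ ((q-1)/q) * V ^ (1/q)) * U ^ (-(1/q)) * ENNReal.ofReal C₀ ^ (1/q) := by
                ring
            _ = V * U ^ (-(1/q)) * ENNReal.ofReal C₀ ^ (1/q) := by
                rw [← ENNReal.rpow_add _ _ hV0 hVtop]
                congr 2
                rw [show (q-1)/q + 1/q = 1 by field_simp; ring, ENNReal.rpow_one]
            _ = ENNReal.ofReal C₀ ^ (1/q) * V * U ^ (-(1/q)) := by ring
  set E : ℝ≥0∞ := ENNReal.ofReal C₀ ^ (1/q) * V * U ^ (-(1/p)) with hE
  have hIa : (∫⁻ z in Q, ENNReal.ofReal |a z|) ≤ E := by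
    calc (∫⁻ z in Q, ENNReal.ofReal |a z|)
        = ∫⁻ z, (f * g) z ∂(volume.restrict Q) := lintegral_congr_ae hfg
      _ ≤ (∫⁻ z, f z ^ q ∂(volume.restrict Q)) ^ (1/q)
            * (∫⁻ z, g z ^ q' ∂(volume.restrict Q)) ^ (1/q') := hHolder
      _ ≤ U ^ (1/q - 1/p) * (ENNReal.ofReal C₀ ^ (1/q) * V * U ^ (-(1/q))) := by
          rw [hgq]
          exact mul_le_mul' hfq hIle
      _ = ENNReal.ofReal C₀ ^ (1/q) * V * (U ^ (1/q - 1/p) * U ^ (-(1/q))) := by ring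
      _ = E := by
          rw [hE, ← ENNReal.rpow_add _ _ hU0 hUtop]
          congr 2
          ring
  have hEtop : E ≠ ⊤ := by
    rw [hE]
    refine ENNReal.mul_ne_top (ENNReal.mul_ne_top ?_ hVtop) ?_
    · exact ENNReal.rpow_ne_top_of_nonneg (by positivity) ENNReal.ofReal_ne_top
    · rw [ENNReal.rpow_neg]
      exact ENNReal.inv_ne_top.mpr (ENNReal.rpow_pos (lt_of_le_of_ne zero_le (Ne.symm hU0))
        hUtop).ne'
  have ha_glob : (∫⁻ z, ENNReal.ofReal |a z|) = ∫⁻ z in Q, ENNReal.ofReal |a z| := by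
    rw [← lintegral_indicator hQm]
    refine lintegral_congr fun z => ?_
    by_cases hz : z ∈ Q
    · rw [Set.indicator_of_mem hz]
    · rw [Set.indicator_of_notMem hz, ha0 z hz]
      simp
  have ha_int : Integrable a := by
    refine ⟨ha_meas.aestronglyMeasurable, ?_⟩
    rw [HasFiniteIntegral]
    calc (∫⁻ z, (‖a z‖₊ : ℝ≥0∞)) = ∫⁻ z, ENNReal.ofReal |a z| := by
          refine lintegral_congr fun z => ?_
          exact Real.enorm_eq_ofReal_abs _
      _ = ∫⁻ z in Q, ENNReal.ofReal |a z| := ha_glob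
      _ ≤ E := hIa
      _ < ⊤ := hEtop.lt_top
  set M : ℝ := ∫ z, |a z| with hM
  have hM0 : 0 ≤ M := integral_nonneg fun z => abs_nonneg _
  have hMbound : M ≤ C₀ ^ (1/q) * V.toReal * U.toReal ^ (-(1/p)) := by
    have h1 : ENNReal.ofReal M = ∫⁻ z, ENNReal.ofReal |a z| :=
      ofReal_integral_eq_lintegral_ofReal ha_int.abs (ae_of_all _ fun z => abs_nonneg _)
    have h2 : ENNReal.ofReal M ≤ E := by rw [h1, ha_glob]; exact hIa
    calc M = (ENNReal.ofReal M).toReal := (ENNReal.toReal_ofReal hM0).symm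
      _ ≤ E.toReal := ENNReal.toReal_mono hEtop h2
      _ = C₀ ^ (1/q) * V.toReal * U.toReal ^ (-(1/p)) := by
          rw [hE, ENNReal.toReal_mul, ENNReal.toReal_mul, ← ENNReal.toReal_rpow,
            ← ENNReal.toReal_rpow, ENNReal.toReal_ofReal hC₀.le]
  -- ### geometry
  set R : ℝ := ‖x - x₀‖ with hRdef
  have hxR : Real.sqrt n * r < R := by
    have hx' : ∃ i, ¬ |x i - x₀ i| ≤ 2 * Real.sqrt n * r / 2 := by
      by_contra hcon
      push_neg at hcon
      exact hx fun i => hcon i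
    obtain ⟨i, hi⟩ := hx'
    push_neg at hi
    calc Real.sqrt n * r = 2 * Real.sqrt n * r / 2 := by ring
      _ < |x i - x₀ i| := hi
      _ = |(x - x₀) i| := by simp [PiLp.sub_apply]
      _ ≤ ‖x - x₀‖ := abs_apply_le_norm _ _
  have hR0 : 0 < R := lt_of_le_of_lt (by positivity) hxR
  have hQz : ∀ z ∈ Q, ‖z - x₀‖ ≤ Real.sqrt n * (r/2) := by
    intro z hz
    refine norm_le_sqrt_mul _ (by positivity) fun i => ?_
    simpa [PiLp.sub_apply] using hz i
  set K : ℝ := (Real.sqrt n * r / 2) ^ α * M with hK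
  have hK0 : 0 ≤ K := by positivity
  -- ### the key kernel estimate
  have key : ∀ t, 0 < t → ∀ φ ∈ Calpha n α,
      |∫ z, a z * dilKer φ t x z| ≤ K * t ^ (-β) := by
    intro t ht φ hφ
    obtain ⟨hφs, hφi, hφh⟩ := hφ
    have hφcont : Continuous φ := continuous_of_holder hα0 hφh
    have hφb : ∀ u, |φ u| ≤ 3 := by
      intro u
      by_cases hu : ‖u‖ ≤ 1
      · set e : Rn n := EuclideanSpace.single (⟨0, hn⟩ : Fin n) (3:ℝ) with he'
        have he : ‖e‖ = 3 := by
          rw [he', EuclideanSpace.norm_single]; norm_num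
        have h1 : ‖e‖ ≤ ‖u + e‖ + ‖u‖ := by
          calc ‖e‖ = ‖(u + e) - u‖ := by rw [add_sub_cancel_left]
            _ ≤ ‖u + e‖ + ‖u‖ := norm_sub_le _ _
        have hv : 1 < ‖u + e‖ := by linarith
        calc |φ u| = |φ u - φ (u + e)| := by
              rw [calpha_eq_zero hφs hv, sub_zero]
          _ ≤ ‖u - (u + e)‖ ^ α := hφh _ _
          _ = 3 ^ α := by rw [show u - (u+e) = -e by abel, norm_neg, he]
          _ ≤ 3 := by
              calc (3:ℝ) ^ α ≤ 3 ^ (1:ℝ) :=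
                    Real.rpow_le_rpow_of_exponent_le (by norm_num) hα1
                _ = 3 := Real.rpow_one 3
      · rw [calpha_eq_zero hφs (lt_of_not_ge hu)]
        norm_num
    have htzpow : (0:ℝ) < t ^ (-(n:ℤ)) := zpow_pos ht _
    have hk_cont : Continuous (dilKer φ t x) := by
      refine continuous_const.mul (hφcont.comp ?_)
      exact (continuous_const.sub continuous_id : Continuous fun z : Rn n => x - z).const_smul t⁻¹
    have hk_bdd : ∀ z, ‖dilKer φ t x z‖ ≤ t ^ (-(n:ℤ)) * 3 := by
      intro z
      rw [dilKer, Real.norm_eq_abs, abs_mul, abs_of_pos htzpow]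
      exact mul_le_mul_of_nonneg_left (hφb _) htzpow.le
    have hi1 : Integrable (fun z => a z * dilKer φ t x z) := by
      have := (ha_int.bdd_mul hk_cont.aestronglyMeasurable (ae_of_all _ hk_bdd))
      exact this.congr (ae_of_all _ fun z => mul_comm _ _)
    have hi3 : Integrable (fun z => a z * (dilKer φ t x z - dilKer φ t x x₀)) := by
      have : (fun z => a z * (dilKer φ t x z - dilKer φ t x x₀))
          = fun z => a z * dilKer φ t x z - a z * dilKer φ t x x₀ := by
        funext z; ring
      rw [this]
      exact hi1.sub (ha_int.mul_const _)
    have hcanc : ∫ z, a z * dilKer φ t x z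
        = ∫ z, a z * (dilKer φ t x z - dilKer φ t x x₀) := by
      have h4 : (fun z => a z * (dilKer φ t x z - dilKer φ t x x₀))
          = fun z => a z * dilKer φ t x z - a z * dilKer φ t x x₀ := by
        funext z; ring
      rw [h4, integral_sub hi1 (ha_int.mul_const _), integral_mul_const, ha_zero,
        zero_mul, sub_zero]
    have hpt : ∀ z, ‖a z * (dilKer φ t x z - dilKer φ t x x₀)‖
        ≤ |a z| * ((Real.sqrt n * r / 2) ^ α * t ^ (-β)) := by
      intro z
      rw [Real.norm_eq_abs, abs_mul]
      by_cases hz : z ∈ Q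
      · apply mul_le_mul_of_nonneg_left _ (abs_nonneg _)
        have h1 : dilKer φ t x z - dilKer φ t x x₀
            = t ^ (-(n:ℤ)) * (φ (t⁻¹ • (x - z)) - φ (t⁻¹ • (x - x₀))) := by
          simp only [dilKer]; ring
        rw [h1, abs_mul, abs_of_pos htzpow]
        have h3 : t⁻¹ • (x - z) - t⁻¹ • (x - x₀) = t⁻¹ • (x₀ - z) := by
          rw [← smul_sub]; congr 1; abel
        have h2 : |φ (t⁻¹ • (x - z)) - φ (t⁻¹ • (x - x₀))| ≤ (‖z - x₀‖ / t) ^ α := by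
          calc |φ (t⁻¹ • (x - z)) - φ (t⁻¹ • (x - x₀))|
              ≤ ‖t⁻¹ • (x - z) - t⁻¹ • (x - x₀)‖ ^ α := hφh _ _
            _ = (‖z - x₀‖ / t) ^ α := by
                rw [h3, norm_smul, norm_inv, Real.norm_eq_abs, abs_of_pos ht,
                  show ‖x₀ - z‖ = ‖z - x₀‖ from norm_sub_rev _ _]
                rw [inv_mul_eq_div]
        calc t ^ (-(n:ℤ)) * |φ (t⁻¹ • (x - z)) - φ (t⁻¹ • (x - x₀))|
            ≤ t ^ (-(n:ℤ)) * (‖z - x₀‖ / t) ^ α :=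
              mul_le_mul_of_nonneg_left h2 htzpow.le
          _ ≤ t ^ (-(n:ℤ)) * ((Real.sqrt n * (r/2)) / t) ^ α := by
              have hd : ‖z - x₀‖ / t ≤ (Real.sqrt n * (r/2)) / t := by
                rw [div_eq_mul_inv, div_eq_mul_inv]
                exact mul_le_mul_of_nonneg_right (hQz z hz) (inv_nonneg.mpr ht.le)
              exact mul_le_mul_of_nonneg_left
                (Real.rpow_le_rpow (by positivity) hd hα0.le) htzpow.le
          _ = (Real.sqrt n * r / 2) ^ α * t ^ (-β) := by
              rw [show t ^ (-(n:ℤ)) = t ^ (-(n:ℝ)) from by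
                  rw [← Real.rpow_intCast t (-(n:ℤ))]; norm_num,
                Real.div_rpow (by positivity) ht.le,
                show t ^ (-β) = t ^ (-(n:ℝ)) * t ^ (-α) from by
                  rw [← Real.rpow_add ht]; congr 1; rw [hβ]; ring,
                Real.rpow_neg ht.le α,
                show Real.sqrt n * (r/2) = Real.sqrt n * r / 2 by ring]
              field_simp
      · rw [ha0 z hz]
        simp
    calc |∫ z, a z * dilKer φ t x z|
        = |∫ z, a z * (dilKer φ t x z - dilKer φ t x x₀)| := by rw [hcanc]
      _ ≤ ∫ z, ‖a z * (dilKer φ t x z - dilKer φ t x x₀)‖ := by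
          rw [← Real.norm_eq_abs]
          exact norm_integral_le_integral_norm _
      _ ≤ ∫ z, |a z| * ((Real.sqrt n * r / 2) ^ α * t ^ (-β)) :=
          integral_mono hi3.norm ((ha_int.abs).mul_const _) hpt
      _ = M * ((Real.sqrt n * r / 2) ^ α * t ^ (-β)) := by rw [integral_mul_const]
      _ = K * t ^ (-β) := by rw [hK]; ring
  -- ### vanishing for small t
  have hzero_small : ∀ t, 0 < t → t < R/2 → ∀ φ ∈ Calpha n α,
      (∫ z, a z * dilKer φ t x z) = 0 := by
    intro t ht htR φ hφ
    obtain ⟨hφs, -, -⟩ := hφ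
    have hvan : ∀ z, a z * dilKer φ t x z = 0 := by
      intro z
      by_cases hz : z ∈ Q
      · have htri : R ≤ ‖x - z‖ + ‖z - x₀‖ := by
          calc R = ‖(x - z) + (z - x₀)‖ := by rw [hRdef]; congr 1; abel
            _ ≤ ‖x - z‖ + ‖z - x₀‖ := norm_add_le _ _
        have hzx : R/2 ≤ ‖x - z‖ := by
          have h5 := hQz z hz
          have h7 : Real.sqrt n * (r/2) = (Real.sqrt n * r)/2 := by ring
          rw [h7] at h5
          linarith
        have hu : 1 < ‖t⁻¹ • (x - z)‖ := by
          rw [norm_smul, norm_inv, Real.norm_eq_abs, abs_of_pos ht]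
          have h6 : t < ‖x - z‖ := lt_of_lt_of_le htR hzx
          calc (1:ℝ) = t⁻¹ * t := (inv_mul_cancel₀ ht.ne').symm
            _ < t⁻¹ * ‖x - z‖ := by
                exact mul_lt_mul_of_pos_left h6 (inv_pos.mpr ht)
        have : φ (t⁻¹ • (x - z)) = 0 := calpha_eq_zero hφs hu
        simp [dilKer, this]
      · simp [ha0 z hz]
    simp only [hvan]
    exact integral_zero _ _
  -- ### bound for intrAf
  have hA_le : ∀ t ∈ Set.Ioi (0:ℝ), intrAf α a x t
      ≤ (Set.Ici (R/2)).indicator (fun s => ENNReal.ofReal (K * s ^ (-β))) t := by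
    intro t ht
    by_cases htR : R/2 ≤ t
    · rw [Set.indicator_of_mem (Set.mem_Ici.mpr htR)]
      exact iSup₂_le fun φ hφ => ENNReal.ofReal_le_ofReal (key t ht φ hφ)
    · rw [Set.indicator_of_notMem (fun h => htR (Set.mem_Ici.mp h))]
      refine iSup₂_le fun φ hφ => ?_
      rw [hzero_small t ht (lt_of_not_ge htR) φ hφ]
      simp
  -- ### the square function estimate
  have hfinal : gSF (intrAf α a) x ≤ ENNReal.ofReal (K * (R/2) ^ (-β)) := by
    rw [gSF]
    have hc2 : 0 < R/2 := by linarith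
    have h1 : (∫⁻ t in Set.Ioi (0:ℝ), (intrAf α a x t) ^ 2 * (ENNReal.ofReal t)⁻¹)
        ≤ ∫⁻ t in Set.Ioi (0:ℝ),
            (Set.Ici (R/2)).indicator (fun s => ENNReal.ofReal (K^2 * s ^ (-(2*β) - 1))) t := by
      refine lintegral_mono_ae ((ae_restrict_iff' measurableSet_Ioi).mpr
        (ae_of_all _ fun t ht => ?_))
      have hA := hA_le t ht
      have ht0 : (0:ℝ) < t := ht
      by_cases htR : R/2 ≤ t
      · rw [Set.indicator_of_mem (Set.mem_Ici.mpr htR)] at hA ⊢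
        calc (intrAf α a x t) ^ 2 * (ENNReal.ofReal t)⁻¹
            ≤ (ENNReal.ofReal (K * t ^ (-β))) ^ 2 * (ENNReal.ofReal t)⁻¹ := by
              gcongr
          _ = ENNReal.ofReal (K^2 * t ^ (-(2*β) - 1)) := by
              rw [← ENNReal.ofReal_pow (by positivity),
                ← ENNReal.ofReal_inv_of_pos ht0,
                ← ENNReal.ofReal_mul (by positivity)]
              congr 1
              have et : (t ^ (-β)) ^ 2 * t⁻¹ = t ^ (-(2*β) - 1) := by
                rw [← Real.rpow_natCast (t ^ (-β)) 2, ← Real.rpow_mul ht0.le,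
                  ← Real.rpow_neg_one t, ← Real.rpow_add ht0]
                congr 1
                push_cast
                ring
              calc (K * t ^ (-β)) ^ 2 * t⁻¹ = K^2 * ((t ^ (-β)) ^ 2 * t⁻¹) := by ring
                _ = K^2 * t ^ (-(2*β) - 1) := by rw [et]
      · rw [Set.indicator_of_notMem (fun h => htR (Set.mem_Ici.mp h))] at hA ⊢
        have hA0 : intrAf α a x t = 0 := le_zero_iff.mp hA
        simp [hA0]
    have h2 : (∫⁻ t in Set.Ioi (0:ℝ),
          (Set.Ici (R/2)).indicator (fun s => ENNReal.ofReal (K^2 * s ^ (-(2*β) - 1))) t)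
        = ∫⁻ t in Set.Ioi (R/2), ENNReal.ofReal (K^2 * t ^ (-(2*β) - 1)) := by
      rw [lintegral_indicator measurableSet_Ici, Measure.restrict_restrict measurableSet_Ici,
        show Set.Ici (R/2) ∩ Set.Ioi (0:ℝ) = Set.Ici (R/2) from
          Set.inter_eq_self_of_subset_left (fun s hs => lt_of_lt_of_le hc2 hs)]
      exact (setLIntegral_congr (Ioi_ae_eq_Ici (a := R/2))).symm
    have h3 : (∫⁻ t in Set.Ioi (R/2), ENNReal.ofReal (K^2 * t ^ (-(2*β) - 1)))
        = ENNReal.ofReal (K^2 * ((R/2) ^ (-(2*β)) / (2*β))) := by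
      have hs : (-(2*β) - 1) < -1 := by linarith
      rw [← ofReal_integral_eq_lintegral_ofReal
        ((integrableOn_Ioi_rpow_of_lt hs hc2).const_mul _)
        ((ae_restrict_iff' measurableSet_Ioi).mpr (ae_of_all _ fun s hs' => by
          have : (0:ℝ) < s := lt_trans hc2 hs'
          positivity))]
      congr 1
      rw [MeasureTheory.integral_const_mul, integral_Ioi_rpow_of_lt hs hc2]
      rw [show (-(2*β) - 1 + 1) = -(2*β) by ring]
      field_simp
    have hreal : (K^2 * ((R/2) ^ (-(2*β)) / (2*β))) ^ ((1:ℝ)/2) ≤ K * (R/2) ^ (-β) := by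
      have h2β : 1 ≤ 2*β := by linarith
      have e2 : (R/2) ^ (-(2*β)) = ((R/2) ^ (-β)) ^ 2 := by
        rw [← Real.rpow_natCast ((R/2) ^ (-β)) 2, ← Real.rpow_mul hc2.le]
        congr 1
        push_cast
        ring
      have e1 : K^2 * ((R/2) ^ (-(2*β)) / (2*β)) ≤ (K * (R/2) ^ (-β)) ^ 2 := by
        rw [e2]
        calc K^2 * (((R/2) ^ (-β))^2 / (2*β)) ≤ K^2 * ((R/2) ^ (-β))^2 :=
              mul_le_mul_of_nonneg_left (div_le_self (by positivity) h2β) (by positivity)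
          _ = (K * (R/2) ^ (-β))^2 := by ring
      calc (K^2 * ((R/2) ^ (-(2*β)) / (2*β))) ^ ((1:ℝ)/2)
          ≤ ((K * (R/2) ^ (-β)) ^ 2) ^ ((1:ℝ)/2) :=
            Real.rpow_le_rpow (by positivity) e1 (by norm_num)
        _ = K * (R/2) ^ (-β) := by
            rw [← Real.rpow_natCast (K * (R/2) ^ (-β)) 2, ← Real.rpow_mul (by positivity)]
            norm_num
    calc (∫⁻ t in Set.Ioi (0:ℝ), (intrAf α a x t) ^ 2 * (ENNReal.ofReal t)⁻¹) ^ ((1:ℝ)/2)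
        ≤ (ENNReal.ofReal (K^2 * ((R/2) ^ (-(2*β)) / (2*β)))) ^ ((1:ℝ)/2) :=
          ENNReal.rpow_le_rpow (h1.trans_eq (h2.trans h3)) (by norm_num)
      _ = ENNReal.ofReal ((K^2 * ((R/2) ^ (-(2*β)) / (2*β))) ^ ((1:ℝ)/2)) := by
          rw [ENNReal.ofReal_rpow_of_nonneg (by positivity) (by norm_num)]
      _ ≤ ENNReal.ofReal (K * (R/2) ^ (-β)) := ENNReal.ofReal_le_ofReal hreal
  -- ### conclusion
  refine hfinal.trans (ENNReal.ofReal_le_ofReal ?_)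
  have hU0' : 0 ≤ U.toReal := ENNReal.toReal_nonneg
  have e3 : (R/2) ^ (-β) = 2 ^ β * R ^ (-β) := by
    rw [Real.rpow_neg (by positivity), Real.div_rpow hR0.le (by norm_num),
      Real.rpow_neg hR0.le]
    field_simp
  have e4 : (Real.sqrt n * r / 2) ^ α = (Real.sqrt n / 2) ^ α * r ^ α := by
    rw [← Real.mul_rpow (by positivity) hr.le]
    congr 1
    ring
  calc K * (R/2) ^ (-β)
      = ((Real.sqrt n / 2) ^ α * r ^ α * (2 ^ β * R ^ (-β))) * M := by
        rw [hK, e3, e4]; ring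
    _ ≤ ((Real.sqrt n / 2) ^ α * r ^ α * (2 ^ β * R ^ (-β)))
          * (C₀ ^ (1/q) * V.toReal * U.toReal ^ (-(1/p))) := by
        apply mul_le_mul_of_nonneg_left hMbound (by positivity)
    _ = 2 ^ β * (Real.sqrt n / 2) ^ α * C₀ ^ (1/q)
          * (V.toReal / U.toReal ^ (1/p)) * r ^ α * R ^ (-β) := by
        rw [Real.rpow_neg hU0' (1/p), div_eq_mul_inv]
        ring

end
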